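/- For all integers n: E_n·E_{n+3} - E_{n+1}·E_{n+2} = E_{-n-4} and E_{n+3}² - E_{n+2}·E_{n+4} = E_{-n-4}, where E is the Narayana cows sequence extended to ℤ. -/

import Mathlib

theorem narayana_identity_45 (E : ℤ → ℤ)
    (hrec : ∀ n : ℤ, E (n + 3) = E n + E (n + 2))
    (h0 : E 0 = 0) (h1 : E 1 = 1) (h2 : E 2 = 1) :
    ∀ n : ℤ, E n * E (n + 3) - E (n + 1) * E (n + 2) = E (-n - 4) ∧
      E (n + 3) ^ 2 - E (n + 2) * E (n + 4) = E (-n - 4) := by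
  have e4 : ∀ n : ℤ, E (n + 4) = E (n + 1) + E (n + 3) := by
    intro n
    rw [show (n + 4 : ℤ) = n + 1 + 3 by ring, show (n + 3 : ℤ) = n + 1 + 2 by ring]
    exact hrec (n + 1)
  have e5 : ∀ n : ℤ, E (n + 5) = E (n + 2) + E (n + 4) := by
    intro n
    rw [show (n + 5 : ℤ) = n + 2 + 3 by ring, show (n + 4 : ℤ) = n + 2 + 2 by ring]
    exact hrec (n + 2)
  have e6 : ∀ n : ℤ, E (n + 6) = E (n + 3) + E (n + 5) := by
    intro n
    rw [show (n + 6 : ℤ) = n + 3 + 3 by ring, show (n + 5 : ℤ) = n + 3 + 2 by ring]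
    exact hrec (n + 3)
  have eneg : ∀ n : ℤ, E (-n - 4) = E (-n - 7) + E (-n - 5) := by
    intro n
    rw [show (-n - 4 : ℤ) = -n - 7 + 3 by ring, show (-n - 5 : ℤ) = -n - 7 + 2 by ring]
    exact hrec (-n - 7)
  have hD : ∀ n : ℤ, E n * E (n + 3) - E (n + 1) * E (n + 2) - E (-n - 4) =
      (E (n + 3) * E (n + 6) - E (n + 4) * E (n + 5) - E (-n - 7)) +
      (E (n + 1) * E (n + 4) - E (n + 2) * E (n + 3) - E (-n - 5)) := by
    intro n
    rw [e6 n, e5 n, e4 n, hrec n, eneg n]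
    ring
  -- base values
  have h3 : E 3 = 1 := by have := hrec 0; norm_num [h0, h2] at this; linarith
  have h4 : E 4 = 2 := by have := hrec 1; norm_num [h1, h3] at this; linarith
  have h5 : E 5 = 3 := by have := hrec 2; norm_num [h2, h4] at this; linarith
  have hm1 : E (-1) = 0 := by have := hrec (-1); norm_num [h1, h2] at this; linarith
  have hm2 : E (-2) = 1 := by have := hrec (-2); norm_num [h0, h1] at this; linarith
  have hm3 : E (-3) = 0 := by have := hrec (-3); norm_num [h0, hm1] at this; linarith
  have hm4 : E (-4) = -1 := by have := hrec (-4); norm_num [hm1, hm2] at this; linarith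
  have hm5 : E (-5) = 1 := by have := hrec (-5); norm_num [hm2, hm3] at this; linarith
  have hm6 : E (-6) = 1 := by have := hrec (-6); norm_num [hm3, hm4] at this; linarith
  have triple : ∀ n : ℤ,
      (E n * E (n + 3) - E (n + 1) * E (n + 2) = E (-n - 4)) ∧
      (E (n + 1) * E (n + 4) - E (n + 2) * E (n + 3) = E (-n - 5)) ∧
      (E (n + 2) * E (n + 5) - E (n + 3) * E (n + 4) = E (-n - 6)) := by
    intro n
    induction n using Int.induction_on with
    | zero => norm_num [h0, h1, h2, h3, h4, h5, hm4, hm5, hm6]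
    | succ k ih =>
      rw [show ((k : ℤ) + 1 + 3) = (k : ℤ) + 4 by ring,
          show ((k : ℤ) + 1 + 1) = (k : ℤ) + 2 by ring,
          show ((k : ℤ) + 1 + 2) = (k : ℤ) + 3 by ring,
          show (-((k : ℤ) + 1) - 4) = -(k : ℤ) - 5 by ring,
          show ((k : ℤ) + 1 + 4) = (k : ℤ) + 5 by ring,
          show (-((k : ℤ) + 1) - 5) = -(k : ℤ) - 6 by ring,
          show ((k : ℤ) + 1 + 5) = (k : ℤ) + 6 by ring,
          show (-((k : ℤ) + 1) - 6) = -(k : ℤ) - 7 by ring]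
      exact ⟨ih.2.1, ih.2.2, by linarith [hD k, ih.1, ih.2.1]⟩
    | pred k ih =>
      rw [show (-(k : ℤ) - 1 + 3) = -(k : ℤ) + 2 by ring,
          show (-(k : ℤ) - 1 + 1) = -(k : ℤ) by ring,
          show (-(k : ℤ) - 1 + 2) = -(k : ℤ) + 1 by ring,
          show (-(-(k : ℤ) - 1) - 4) = -(-(k : ℤ)) - 3 by ring,
          show (-(k : ℤ) - 1 + 4) = -(k : ℤ) + 3 by ring,
          show (-(-(k : ℤ) - 1) - 5) = -(-(k : ℤ)) - 4 by ring,
          show (-(k : ℤ) - 1 + 5) = -(k : ℤ) + 4 by ring,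
          show (-(-(k : ℤ) - 1) - 6) = -(-(k : ℤ)) - 5 by ring]
      have hD' := hD (-(k : ℤ) - 1)
      rw [show (-(k : ℤ) - 1 + 3) = -(k : ℤ) + 2 by ring,
          show (-(k : ℤ) - 1 + 6) = -(k : ℤ) + 5 by ring,
          show (-(k : ℤ) - 1 + 4) = -(k : ℤ) + 3 by ring,
          show (-(k : ℤ) - 1 + 5) = -(k : ℤ) + 4 by ring,
          show (-(-(k : ℤ) - 1) - 7) = -(-(k : ℤ)) - 6 by ring,
          show (-(k : ℤ) - 1 + 1) = -(k : ℤ) by ring,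
          show (-(k : ℤ) - 1 + 2) = -(k : ℤ) + 1 by ring,
          show (-(-(k : ℤ) - 1) - 4) = -(-(k : ℤ)) - 3 by ring,
          show (-(-(k : ℤ) - 1) - 5) = -(-(k : ℤ)) - 4 by ring] at hD'
      exact ⟨by linarith [ih.1, ih.2.2], ih.1, ih.2.1⟩
  intro n
  refine ⟨(triple n).1, ?_⟩
  linear_combination (triple n).1 + E (n + 3) * hrec n - E (n + 2) * e4 n
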